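/- Let G be a graph on {1,...,n} without twin pairs, let B ∈ B(G), and suppose {l,m} is a critical edge of G with B_{lm} = 1. Then for no λ ∈ ℝ and no r does the polynomial x^T B x − 1/α(G) admit a representation σ + Σ_{i=1}^n x_i σ_i + q(Σ_{i=1}^n x_i − 1) with σ, σ_1,...,σ_n sums of squares and q ∈ ℝ[x]. Equivalently, the Lasserre hierarchy of min_{x∈Δ_n} x^T B x does not have finite convergence. -/

import Mathlib

open Finset Matrix MvPolynomial

/-- A polynomial is a sum of squares. -/
def IsSOS {n : ℕ} (p : MvPolynomial (Fin n) ℝ) : Prop :=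
  ∃ (k : ℕ) (f : Fin k → MvPolynomial (Fin n) ℝ), p = ∑ j, (f j) ^ 2

/-- The stability number: the maximum cardinality of a stable (independent) set. -/
noncomputable def alpha {V : Type*} [Fintype V] (G : SimpleGraph V) : ℕ :=
  sSup {k | ∃ S : Finset V, (∀ i ∈ S, ∀ j ∈ S, ¬ G.Adj i j) ∧ S.card = k}

lemma sos_eval_nonneg {n : ℕ} {p : MvPolynomial (Fin n) ℝ} (hp : IsSOS p) (x : Fin n → ℝ) :
    0 ≤ eval x p := by
  obtain ⟨k, f, rfl⟩ := hp
  simp only [map_sum, map_pow]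
  positivity

lemma sos_eval_zero {n : ℕ} {p : MvPolynomial (Fin n) ℝ} (hp : IsSOS p) {x : Fin n → ℝ}
    (hx : eval x p = 0) (k : Fin n) : eval x (pderiv k p) = 0 := by
  obtain ⟨K, f, rfl⟩ := hp
  have hf : ∀ j, eval x (f j) = 0 := by
    intro j
    have h1 : ∑ j, (eval x (f j)) ^ 2 = 0 := by
      simpa only [map_sum, map_pow] using hx
    have := (Finset.sum_eq_zero_iff_of_nonneg (fun i _ => sq_nonneg (eval x (f i)))).mp h1 j
      (Finset.mem_univ j)
    exact pow_eq_zero_iff (by norm_num) |>.mp this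
  rw [map_sum, map_sum]
  refine Finset.sum_eq_zero fun j _ => ?_
  rw [show (f j) ^ 2 = f j * f j by ring, pderiv_mul, map_add, _root_.map_mul, _root_.map_mul,
    hf j]
  ring


set_option maxHeartbeats 1000000 in
/-- If `G` has no twin pairs, `B ∈ B(G)`, and `{l,m}` is a critical edge with `B_{lm} = 1`,
then `xᵀBx - 1/α(G)` has no representation in the quadratic module generated by `x₁,…,xₙ`
plus the ideal generated by `Σ xᵢ - 1`: the Lasserre hierarchy does not converge finitely. -/
theorem no_finite_convergence {n : ℕ} (G : SimpleGraph (Fin n))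
    (htwinfree : ∀ i j, G.Adj i j → G.neighborSet i \ {j} ≠ G.neighborSet j \ {i})
    (B : Matrix (Fin n) (Fin n) ℝ) (hsymm : B.IsSymm)
    (hdiag : ∀ i, B i i = 1)
    (hedge : ∀ i j, G.Adj i j → 1 ≤ B i j)
    (hnonedge : ∀ i j, i ≠ j → ¬ G.Adj i j → B i j = 0)
    (l m : Fin n) (hlm : G.Adj l m)
    (hcrit : alpha (G.deleteEdges {s(l, m)}) = alpha G + 1)
    (hBlm : B l m = 1) :
    ¬ ∃ (σ₀ : MvPolynomial (Fin n) ℝ) (σ : Fin n → MvPolynomial (Fin n) ℝ)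
        (q : MvPolynomial (Fin n) ℝ),
      IsSOS σ₀ ∧ (∀ i, IsSOS (σ i)) ∧
      (∑ i, ∑ j, C (B i j) * X i * X j) - C (1 / (alpha G : ℝ)) =
        σ₀ + (∑ i, X i * σ i) + q * ((∑ i, X i) - 1) := by
  rintro ⟨σ₀, σ, q, hσ₀, hσ, hid⟩
  classical
  have hlm' : l ≠ m := G.ne_of_adj hlm
  set α := alpha G with hαdef
  -- basic facts about alpha
  have hbdd : ∀ (H : SimpleGraph (Fin n)), BddAbove
      {k | ∃ S : Finset (Fin n), (∀ i ∈ S, ∀ j ∈ S, ¬ H.Adj i j) ∧ S.card = k} := by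
    intro H
    refine ⟨n, fun k hk => ?_⟩
    obtain ⟨S, -, rfl⟩ := hk
    simpa using Finset.card_le_univ S
  have hne : ∀ (H : SimpleGraph (Fin n)),
      ({k | ∃ S : Finset (Fin n), (∀ i ∈ S, ∀ j ∈ S, ¬ H.Adj i j) ∧ S.card = k} : Set ℕ).Nonempty :=
    fun H => ⟨0, ∅, by simp, by simp⟩
  have hle : ∀ (S : Finset (Fin n)), (∀ i ∈ S, ∀ j ∈ S, ¬ G.Adj i j) → S.card ≤ α :=
    fun S hS => le_csSup (hbdd G) ⟨S, hS, rfl⟩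
  have hα1 : 1 ≤ α := by
    have := hle {l} (by simp)
    simpa using this
  obtain ⟨S, hSstab, hScard⟩ :
      ∃ S : Finset (Fin n), (∀ i ∈ S, ∀ j ∈ S, ¬ (G.deleteEdges {s(l, m)}).Adj i j) ∧
        S.card = α + 1 := by
    have := Nat.sSup_mem (hne (G.deleteEdges {s(l, m)})) (hbdd (G.deleteEdges {s(l, m)}))
    rw [show sSup {k | ∃ S : Finset (Fin n),
        (∀ i ∈ S, ∀ j ∈ S, ¬ (G.deleteEdges {s(l, m)}).Adj i j) ∧ S.card = k}
      = alpha (G.deleteEdges {s(l, m)}) from rfl, hcrit] at this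
    exact this
  have hpair : ∀ i ∈ S, ∀ j ∈ S, G.Adj i j → (i = l ∧ j = m) ∨ (i = m ∧ j = l) := by
    intro i hi j hj hAdj
    have h := hSstab i hi j hj
    rw [SimpleGraph.deleteEdges_adj] at h
    push_neg at h
    have := h hAdj
    simpa [Sym2.eq_iff] using this
  have hlS : l ∈ S := by
    by_contra hl
    have : ∀ i ∈ S, ∀ j ∈ S, ¬ G.Adj i j := by
      intro i hi j hj hAdj
      rcases hpair i hi j hj hAdj with ⟨rfl, rfl⟩ | ⟨rfl, rfl⟩
      · exact hl hi
      · exact hl hj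
    have := hle S this
    omega
  have hmS : m ∈ S := by
    by_contra hm
    have : ∀ i ∈ S, ∀ j ∈ S, ¬ G.Adj i j := by
      intro i hi j hj hAdj
      rcases hpair i hi j hj hAdj with ⟨rfl, rfl⟩ | ⟨rfl, rfl⟩
      · exact hm hj
      · exact hm hi
    have := hle S this
    omega
  have hB0 : ∀ i ∈ S, ∀ j ∈ S, i ≠ j → ¬(i = l ∧ j = m) → ¬(i = m ∧ j = l) → B i j = 0 := by
    intro i hi j hj hij h1 h2
    refine hnonedge i j hij fun hAdj => ?_
    rcases hpair i hi j hj hAdj with h | h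
    · exact h1 h
    · exact h2 h
  -- the curve
  set a : ℝ := 1 / (α : ℝ) with hadef
  have hαR : (0:ℝ) < (α : ℝ) := by exact_mod_cast hα1
  have ha : 0 < a := by positivity
  have haα : (α : ℝ) * a = 1 := by rw [hadef]; field_simp
  set z : ℝ → Fin n → ℝ :=
    fun t i => if i = l then t else if i = m then a - t else if i ∈ S then a else 0 with hzdef
  have hzl : ∀ t, z t l = t := fun t => by
    show (if l = l then t else if l = m then a - t else if l ∈ S then a else 0) = t
    simp
  have hzm : ∀ t, z t m = a - t := fun t => by
    show (if m = l then t else if m = m then a - t else if m ∈ S then a else 0) = a - t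
    simp [hlm'.symm]
  have hzT : ∀ t, ∀ i ∈ S, i ≠ l → i ≠ m → z t i = a := fun t i hi h1 h2 => by
    show (if i = l then t else if i = m then a - t else if i ∈ S then a else 0) = a
    simp [h1, h2, hi]
  have hz0 : ∀ t, ∀ i, i ∉ S → z t i = 0 := fun t i hi => by
    have h1 : i ≠ l := fun h => hi (h ▸ hlS)
    have h2 : i ≠ m := fun h => hi (h ▸ hmS)
    show (if i = l then t else if i = m then a - t else if i ∈ S then a else 0) = 0
    simp [h1, h2, hi]
  have hTcard : ((S.erase l).erase m).card = α - 1 := by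
    rw [Finset.card_erase_of_mem (Finset.mem_erase.mpr ⟨Ne.symm hlm', hmS⟩),
      Finset.card_erase_of_mem hlS, hScard]
    omega
  have hsum1 : ∀ t, ∑ i, z t i = 1 := by
    intro t
    rw [← Finset.sum_subset (Finset.subset_univ S) (fun i _ hi => hz0 t i hi)]
    rw [← Finset.add_sum_erase _ _ hlS,
      ← Finset.add_sum_erase _ _ (Finset.mem_erase.mpr ⟨Ne.symm hlm', hmS⟩)]
    have : ∀ i ∈ (S.erase l).erase m, z t i = a := by
      intro i hi
      simp only [Finset.mem_erase] at hi
      exact hzT t i hi.2.2 hi.2.1 hi.1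
    rw [Finset.sum_congr rfl this, Finset.sum_const, hTcard, hzl, hzm, nsmul_eq_mul]
    have : ((α - 1 : ℕ) : ℝ) = (α : ℝ) - 1 := by
      rw [Nat.cast_sub hα1]; simp
    rw [this]
    nlinarith [haα]
  set r : Fin n → ℝ → ℝ := fun k t => ∑ j, B k j * z t j with hrdef
  have hrl : ∀ t, r l t = a := by
    intro t
    show ∑ j, B l j * z t j = a
    rw [← Finset.sum_subset (Finset.subset_univ ({l, m} : Finset (Fin n)))]
    · rw [Finset.sum_pair hlm', hzl, hzm, hdiag l, hBlm]; ring
    · intro j _ hj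
      simp only [Finset.mem_insert, Finset.mem_singleton, not_or] at hj
      by_cases hjS : j ∈ S
      · rw [hB0 l hlS j hjS (Ne.symm hj.1) (by tauto) (by tauto)]; ring
      · rw [hz0 t j hjS]; ring
  have hrm : ∀ t, r m t = a := by
    intro t
    show ∑ j, B m j * z t j = a
    rw [← Finset.sum_subset (Finset.subset_univ ({l, m} : Finset (Fin n)))]
    · rw [Finset.sum_pair hlm', hzl, hzm, hdiag m, hsymm.apply l m, hBlm]; ring
    · intro j _ hj
      simp only [Finset.mem_insert, Finset.mem_singleton, not_or] at hj
      by_cases hjS : j ∈ S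
      · rw [hB0 m hmS j hjS (Ne.symm hj.2) (by tauto) (by tauto)]; ring
      · rw [hz0 t j hjS]; ring
  have hrS : ∀ i ∈ S, ∀ t, r i t = a := by
    intro i hi t
    by_cases h1 : i = l
    · exact h1 ▸ hrl t
    by_cases h2 : i = m
    · exact h2 ▸ hrm t
    show ∑ j, B i j * z t j = a
    rw [Finset.sum_eq_single_of_mem i (Finset.mem_univ i)]
    · rw [hdiag i, hzT t i hi h1 h2]; ring
    · intro j _ hj
      by_cases hjS : j ∈ S
      · rw [hB0 i hi j hjS (Ne.symm hj) (by tauto) (by tauto)]; ring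
      · rw [hz0 t j hjS]; ring
  have hrdiff : ∀ k t, r k t = r k 0 + t * (B k l - B k m) := by
    intro k t
    have : r k t - r k 0 = t * (B k l - B k m) := by
      show (∑ j, B k j * z t j) - ∑ j, B k j * z 0 j = t * (B k l - B k m)
      rw [← Finset.sum_sub_distrib]
      rw [← Finset.sum_subset (Finset.subset_univ ({l, m} : Finset (Fin n)))]
      · rw [Finset.sum_pair hlm', hzl, hzm, hzl, hzm]; ring
      · intro j _ hj
        simp only [Finset.mem_insert, Finset.mem_singleton, not_or] at hj
        have : z t j = z 0 j := by
          by_cases hjS : j ∈ S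
          · rw [hzT t j hjS hj.1 hj.2, hzT 0 j hjS hj.1 hj.2]
          · rw [hz0 t j hjS, hz0 0 j hjS]
        rw [this]; ring
    linarith [this]
  have hquad : ∀ t, ∑ i, ∑ j, B i j * z t i * z t j = a := by
    intro t
    have : ∀ i, ∑ j, B i j * z t i * z t j = z t i * a := by
      intro i
      have h1 : ∑ j, B i j * z t i * z t j = z t i * r i t := by
        show _ = z t i * ∑ j, B i j * z t j
        rw [Finset.mul_sum]
        exact Finset.sum_congr rfl fun j _ => by ring
      rw [h1]
      by_cases hiS : i ∈ S
      · rw [hrS i hiS t]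
      · rw [hz0 t i hiS]; ring
    rw [Finset.sum_congr rfl fun i _ => this i, ← Finset.sum_mul, hsum1 t, one_mul]
  -- evaluate the identity along the curve
  have hidt : ∀ t : ℝ, 0 = eval (z t) σ₀ + ∑ i, z t i * eval (z t) (σ i) := by
    intro t
    have h := congrArg (eval (z t)) hid
    simp only [map_sub, map_add, map_sum, _root_.map_mul, eval_C, eval_X, _root_.map_one] at h
    rw [hsum1 t, hquad t] at h
    simp only [sub_self, mul_zero, add_zero] at h
    linarith [h]
  -- termwise vanishing on the open interval
  have hnonnegS : ∀ t ∈ Set.Ioo (0:ℝ) a, eval (z t) σ₀ = 0 ∧ ∀ i ∈ S, eval (z t) (σ i) = 0 := by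
    intro t ht
    have hzpos : ∀ i ∈ S, 0 < z t i := by
      intro i hi
      by_cases h1 : i = l
      · rw [h1, hzl]; exact ht.1
      by_cases h2 : i = m
      · rw [h2, hzm]; have := ht.2; simp only [Set.mem_Ioo] at ht; linarith [ht.2]
      · rw [hzT t i hi h1 h2]; exact ha
    have hterm : ∀ i, 0 ≤ z t i * eval (z t) (σ i) := by
      intro i
      by_cases hiS : i ∈ S
      · exact mul_nonneg (le_of_lt (hzpos i hiS)) (sos_eval_nonneg (hσ i) _)
      · rw [hz0 t i hiS]; simp
    have h0 := hidt t
    have hA : 0 ≤ eval (z t) σ₀ := sos_eval_nonneg hσ₀ _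
    have hs : 0 ≤ ∑ i, z t i * eval (z t) (σ i) := Finset.sum_nonneg fun i _ => hterm i
    have hsum0 : ∑ i, z t i * eval (z t) (σ i) = 0 := by linarith
    refine ⟨by linarith, fun i hi => ?_⟩
    have := (Finset.sum_eq_zero_iff_of_nonneg fun i _ => hterm i).mp hsum0 i (Finset.mem_univ i)
    exact (mul_eq_zero.mp this).resolve_left (ne_of_gt (hzpos i hi))
  -- extension to all t via univariate polynomials
  set Z : Fin n → Polynomial ℝ := fun i =>
    if i = l then Polynomial.X else if i = m then Polynomial.C a - Polynomial.X
    else if i ∈ S then Polynomial.C a else 0 with hZdef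
  have hZeval : ∀ i t, Polynomial.eval t (Z i) = z t i := by
    intro i t
    show Polynomial.eval t (if i = l then Polynomial.X else if i = m then
        Polynomial.C a - Polynomial.X else if i ∈ S then Polynomial.C a else 0)
      = (if i = l then t else if i = m then a - t else if i ∈ S then a else 0)
    split_ifs <;> simp
  have hEeval : ∀ (p : MvPolynomial (Fin n) ℝ) (t : ℝ),
      Polynomial.eval t (aeval Z p) = eval (z t) p := by
    intro p t
    have h1 : Polynomial.eval t (aeval Z p) = Polynomial.aeval t (aeval Z p) := by
      rw [Polynomial.coe_aeval_eq_eval]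
    rw [h1, comp_aeval_apply (f := Z) (Polynomial.aeval t) p]
    have h2 : (fun i => Polynomial.aeval t (Z i)) = fun i => z t i := by
      funext i
      rw [Polynomial.coe_aeval_eq_eval, hZeval]
    rw [h2]
    rw [MvPolynomial.aeval_def]
    rw [show algebraMap ℝ ℝ = RingHom.id ℝ from rfl]
    rfl
  have hvanish : ∀ p : MvPolynomial (Fin n) ℝ,
      (∀ t ∈ Set.Ioo (0:ℝ) a, eval (z t) p = 0) → ∀ t, eval (z t) p = 0 := by
    intro p hp t
    have hroot : {x : ℝ | (aeval Z p).IsRoot x}.Infinite := by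
      refine (Set.Ioo_infinite ha).mono fun x hx => ?_
      simp only [Set.mem_setOf_eq, Polynomial.IsRoot]
      rw [hEeval]
      exact hp x hx
    have h0 := Polynomial.eq_zero_of_infinite_isRoot _ hroot
    rw [← hEeval p t, h0, Polynomial.eval_zero]
  have hσ₀z : ∀ t, eval (z t) σ₀ = 0 := hvanish σ₀ fun t ht => (hnonnegS t ht).1
  have hσSz : ∀ i ∈ S, ∀ t, eval (z t) (σ i) = 0 := fun i hi =>
    hvanish (σ i) fun t ht => (hnonnegS t ht).2 i hi
  -- the differentiated identity
  have hpdX : ∀ (k i : Fin n), pderiv k (X i : MvPolynomial (Fin n) ℝ) =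
      if i = k then 1 else 0 := by
    intro k i
    by_cases h : i = k
    · subst h; rw [pderiv_X_self, if_pos rfl]
    · rw [pderiv_X_of_ne h, if_neg h]
  have hevLHS : ∀ (k : Fin n) (t : ℝ),
      eval (z t) (pderiv k ((∑ i, ∑ j, C (B i j) * X i * X j) - C (1 / (α : ℝ)))) = 2 * r k t := by
    intro k t
    rw [map_sub, pderiv_C, sub_zero]
    simp only [map_sum]
    have hterm : ∀ i j : Fin n, eval (z t) (pderiv k (C (B i j) * X i * X j)) =
        (if i = k then B i j * z t j else 0) + (if j = k then B i j * z t i else 0) := by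
      intro i j
      rw [pderiv_mul, pderiv_mul, pderiv_C, zero_mul, zero_add, hpdX, hpdX]
      simp only [mul_ite, mul_one, mul_zero, ite_mul, zero_mul]
      simp only [map_add, apply_ite (eval (z t)), _root_.map_mul, eval_C, eval_X, map_zero]
    calc ∑ i, ∑ j, eval (z t) (pderiv k (C (B i j) * X i * X j))
        = ∑ i, ∑ j, ((if i = k then B i j * z t j else 0) + (if j = k then B i j * z t i else 0)) :=
          Finset.sum_congr rfl fun i _ => Finset.sum_congr rfl fun j _ => hterm i j
      _ = (∑ i, ∑ j, if i = k then B i j * z t j else 0)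
          + ∑ i, ∑ j, if j = k then B i j * z t i else 0 := by
          rw [← Finset.sum_add_distrib]
          exact Finset.sum_congr rfl fun i _ => Finset.sum_add_distrib
      _ = (∑ j, B k j * z t j) + ∑ i, B i k * z t i := by
          congr 1
          · rw [Finset.sum_comm]
            refine Finset.sum_congr rfl fun j _ => ?_
            rw [Finset.sum_ite_eq' Finset.univ k fun i => B i j * z t j]
            simp
          · refine Finset.sum_congr rfl fun i _ => ?_
            rw [Finset.sum_ite_eq' Finset.univ k fun j => B i j * z t i]
            simp
      _ = 2 * r k t := by
          have : ∑ i, B i k * z t i = ∑ i, B k i * z t i :=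
            Finset.sum_congr rfl fun i _ => by rw [hsymm.apply k i]
          rw [this]
          show _ = 2 * ∑ j, B k j * z t j
          ring
  have hevRHS : ∀ (k : Fin n) (t : ℝ),
      eval (z t) (pderiv k (σ₀ + (∑ i, X i * σ i) + q * ((∑ i, X i) - 1)))
        = eval (z t) (σ k) + eval (z t) q := by
    intro k t
    rw [map_add, map_add, map_add, map_add]
    have h1 : eval (z t) (pderiv k σ₀) = 0 := sos_eval_zero hσ₀ (hσ₀z t) k
    have h2 : eval (z t) (pderiv k (∑ i, X i * σ i)) = eval (z t) (σ k) := by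
      rw [map_sum, map_sum]
      have hterm : ∀ i : Fin n, eval (z t) (pderiv k (X i * σ i)) =
          if i = k then eval (z t) (σ k) else 0 := by
        intro i
        rw [pderiv_mul, hpdX]
        simp only [ite_mul, one_mul, zero_mul]
        rw [map_add, _root_.map_mul, eval_X]
        have hD : z t i * eval (z t) (pderiv k (σ i)) = 0 := by
          by_cases hiS : i ∈ S
          · rw [sos_eval_zero (hσ i) (hσSz i hiS t) k, mul_zero]
          · rw [hz0 t i hiS, zero_mul]
        rw [hD, add_zero, apply_ite (eval (z t)), map_zero]
        by_cases h : i = k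
        · rw [if_pos h, if_pos h, h]
        · rw [if_neg h, if_neg h]
      rw [Finset.sum_congr rfl fun i _ => hterm i]
      rw [Finset.sum_ite_eq' Finset.univ k fun _ => eval (z t) (σ k)]
      simp
    have h3 : eval (z t) (pderiv k (q * ((∑ i, X i) - 1))) = eval (z t) q := by
      rw [pderiv_mul]
      have hs : pderiv k ((∑ i : Fin n, X i) - 1 : MvPolynomial (Fin n) ℝ) = 1 := by
        rw [map_sub, pderiv_one, sub_zero, map_sum]
        rw [Finset.sum_congr rfl fun i (_ : i ∈ Finset.univ) => hpdX k i]
        rw [Finset.sum_ite_eq' Finset.univ k fun _ => (1 : MvPolynomial (Fin n) ℝ)]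
        simp
      rw [hs, mul_one]
      simp only [map_add, _root_.map_mul, map_sub, map_sum, eval_X, _root_.map_one]
      rw [hsum1 t]
      ring
    rw [h1, h2, h3]
    ring
  have hkey : ∀ (k : Fin n) (t : ℝ), 2 * r k t = eval (z t) (σ k) + eval (z t) q := by
    intro k t
    have h := congrArg (fun p => eval (z t) (pderiv k p)) hid
    rw [hevLHS k t, hevRHS k t] at h
    exact h
  have hq2a : ∀ t, eval (z t) q = 2 * a := by
    intro t
    have h := hkey l t
    rw [hrl t, hσSz l hlS t] at h
    linarith
  -- find the distinguishing vertex
  obtain ⟨i₀, hi₀⟩ : ∃ i₀ : Fin n,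
      ¬(i₀ ∈ G.neighborSet l \ {m} ↔ i₀ ∈ G.neighborSet m \ {l}) := by
    by_contra h
    push_neg at h
    exact htwinfree l m hlm (Set.ext fun x => h x)
  have hd : 1 ≤ B i₀ l - B i₀ m ∨ B i₀ l - B i₀ m ≤ -1 := by
    by_cases hA : i₀ ∈ G.neighborSet l \ {m}
    · have hB : i₀ ∉ G.neighborSet m \ {l} := fun h => hi₀ ⟨fun _ => h, fun _ => hA⟩
      obtain ⟨hadj, hne⟩ := hA
      rw [SimpleGraph.mem_neighborSet] at hadj
      rw [Set.mem_singleton_iff] at hne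
      have hi₀l : i₀ ≠ l := fun h => (G.loopless.irrefl l) (h ▸ hadj)
      have hnadj : ¬ G.Adj m i₀ := fun h => hB ⟨h, hi₀l⟩
      have hBl : 1 ≤ B i₀ l := hedge i₀ l hadj.symm
      have hBm : B i₀ m = 0 := hnonedge i₀ m hne fun h => hnadj h.symm
      left; rw [hBm]; linarith
    · have hB : i₀ ∈ G.neighborSet m \ {l} := by
        by_contra hB
        exact hi₀ ⟨fun h => absurd h hA, fun h => absurd h hB⟩
      obtain ⟨hadj, hne⟩ := hB
      rw [SimpleGraph.mem_neighborSet] at hadj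
      rw [Set.mem_singleton_iff] at hne
      have hi₀m : i₀ ≠ m := fun h => (G.loopless.irrefl m) (h ▸ hadj)
      have hnadj : ¬ G.Adj l i₀ := fun h => hA ⟨h, hi₀m⟩
      have hBm : 1 ≤ B i₀ m := hedge i₀ m hadj.symm
      have hBl : B i₀ l = 0 := hnonedge i₀ l hne fun h => hnadj h.symm
      right; rw [hBl]; linarith
  -- conclude
  set d : ℝ := 2 * (B i₀ l - B i₀ m) with hddef
  have hd0 : d ≠ 0 := by rcases hd with h | h <;> rw [hddef] <;> intro hc <;> nlinarith
  set c : ℝ := 2 * r i₀ 0 - 2 * a with hcdef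
  have hg : ∀ t, eval (z t) (σ i₀) = c + t * d := by
    intro t
    have h := hkey i₀ t
    rw [hq2a t, hrdiff i₀ t] at h
    rw [hcdef, hddef]
    linarith
  have hneg : eval (z ((-c - 1) / d)) (σ i₀) = -1 := by
    rw [hg, div_mul_cancel₀ _ hd0]
    ring
  have := sos_eval_nonneg (hσ i₀) (z ((-c - 1) / d))
  rw [hneg] at this
  linarith
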